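/- Let n ≥ 5, let the candidate set be {c_0, c_1, …, c_{n−1}}, and let P_n be the profile consisting of the n cyclic votes c_i ≻ c_{(i+1) mod n} ≻ … ≻ c_{(i+n−1) mod n} for i = 0,…,n−1, together with the single vote c_{n−1} ≻ c_{n−2} ≻ … ≻ c_1 ≻ c_0. Let the tie-breaking order T be c_0 ≻ c_{n−1} ≻ c_{n−2} ≻ … ≻ c_1, and let v be the vote c_0 ≻ c_1 ≻ … ≻ c_{n−1}. Then in the profile P_n ++ [v]: (i) the Borda winner is c_0; (ii) the veto winner is c_{n−2}; (iii) N(c_{n−2}, c_0) > N(c_0, c_{n−2}); and hence (iv) the veto+Borda winner is c_{n−2}, not c_0. In particular, adding the single vote v ranking c_0 first does not make c_0 the veto+Borda winner of P_n. -/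

import Mathlib

/-
The Greedy/approximation counterexample profile for `veto + Borda`.
Candidates are `c_0, …, c_{n-1}`, coded as `Fin n`; a vote is a duplicate-free
list of all candidates (earlier = more preferred).
-/

/-- `N P x y`: the number of votes in `P` ranking `x` above `y`. -/
def pairN {n : ℕ} (P : List (List (Fin n))) (x y : Fin n) : ℕ :=
  (P.filter fun v => v.idxOf x < v.idxOf y).length

/-- Borda score: each vote awards `m - r` points to the candidate it ranks in
`r`-th place (here `m = n`, so a 0-based index `t` yields `n - 1 - t`). -/
def bordaScore {n : ℕ} (P : List (List (Fin n))) (e : Fin n) : ℕ :=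
  (P.map fun v => n - 1 - v.idxOf e).sum

/-- The number of votes ranking `e` last. -/
def lastCount {n : ℕ} (P : List (List (Fin n))) (e : Fin n) : ℕ :=
  (P.filter fun v => v.getLast? = some e).length

/-- The Borda winner: the `T`-greatest candidate of maximal Borda score. -/
def bordaWinner {n : ℕ} [NeZero n] (T : LinearOrder (Fin n))
    (P : List (List (Fin n))) : Fin n :=
  @Finset.max' (Fin n) T
    (Finset.univ.filter fun e => ∀ z, bordaScore P z ≤ bordaScore P e) (by
    obtain ⟨w, hw, hm⟩ := Finset.exists_max_image Finset.univ (bordaScore P)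
      Finset.univ_nonempty
    exact ⟨w, Finset.mem_filter.2 ⟨Finset.mem_univ _, fun z => hm z (Finset.mem_univ _)⟩⟩)

/-- The veto winner: the `T`-greatest candidate among those with the fewest
votes ranking them last. -/
def vetoWinner {n : ℕ} [NeZero n] (T : LinearOrder (Fin n))
    (P : List (List (Fin n))) : Fin n :=
  @Finset.max' (Fin n) T
    (Finset.univ.filter fun e => ∀ z, lastCount P e ≤ lastCount P z) (by
    obtain ⟨w, hw, hm⟩ := Finset.exists_min_image Finset.univ (lastCount P)
      Finset.univ_nonempty
    exact ⟨w, Finset.mem_filter.2 ⟨Finset.mem_univ _, fun z => hm z (Finset.mem_univ _)⟩⟩)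

/-- Run-off combination `X + Y`: the common winner if `X` and `Y` agree;
otherwise the pairwise-majority winner between the two winners, with the
`T`-greater candidate winning a tied run-off. -/
def runoffWinner {n : ℕ} (T : LinearOrder (Fin n))
    (X Y : List (List (Fin n)) → Fin n) (P : List (List (Fin n))) : Fin n :=
  let x := X P
  let y := Y P
  if x = y then x
  else if pairN P y x < pairN P x y then x
  else if pairN P x y < pairN P y x then y
  else if T.lt x y then y else x

/-- The tie-breaking order `c_0 ≻ c_{n-1} ≻ c_{n-2} ≻ … ≻ c_1`, realised by
the priority function sending `c_0` to `n` and `c_j` to `j` for `j ≥ 1`. -/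
def Ttb (n : ℕ) : LinearOrder (Fin n) :=
  LinearOrder.lift' (fun e : Fin n => if e.val = 0 then n else e.val) (by
    intro x y h
    have hx := x.isLt
    have hy := y.isLt
    dsimp only at h
    split_ifs at h <;> (try exact Fin.ext (by omega)) <;> (exfalso; omega))

/-- The cyclic vote `c_i ≻ c_{i+1 mod n} ≻ … ≻ c_{i+n-1 mod n}`. -/
def cyc (n : ℕ) (hn : 0 < n) (i : ℕ) : List (Fin n) :=
  (List.range n).map fun t => ⟨(i + t) % n, Nat.mod_lt _ hn⟩

/-- The vote `c_{n-1} ≻ c_{n-2} ≻ … ≻ c_1 ≻ c_0`. -/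
def descVote (n : ℕ) (hn : 0 < n) : List (Fin n) :=
  (List.range n).map fun j => (⟨n - 1 - j, by omega⟩ : Fin n)

/-- The profile `P_n`: the `n` cyclic votes together with the descending vote. -/
def Pn (n : ℕ) (hn : 0 < n) : List (List (Fin n)) :=
  ((List.range n).map fun i => cyc n hn i) ++ [descVote n hn]

lemma mod2 {n a : ℕ} (hn : 0 < n) (h : a < 2*n) : a % n = if a < n then a else a - n := by
  split
  · exact Nat.mod_eq_of_lt ‹_›
  · rw [Nat.mod_eq_sub_mod (by omega)]; exact Nat.mod_eq_of_lt (by omega)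

lemma indexOf_map_range {α} [DecidableEq α] {n : ℕ} (f : ℕ → α)
    (hf : ∀ a < n, ∀ b < n, f a = f b → a = b) {t : ℕ} (ht : t < n) :
    ((List.range n).map f).idxOf (f t) = t := by
  set l := (List.range n).map f with hl
  have hlen : l.length = n := by simp [hl]
  have hmem : f t ∈ l := by
    simp only [hl, List.mem_map, List.mem_range]
    exact ⟨t, ht, rfl⟩
  have hidx : l.idxOf (f t) < n := hlen ▸ List.idxOf_lt_length_iff.2 hmem
  have hget : l.get ⟨l.idxOf (f t), by omega⟩ = f t := List.idxOf_get _
  have hget2 : l.get ⟨l.idxOf (f t), by omega⟩ = f (l.idxOf (f t)) := by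
    simp only [hl, List.get_eq_getElem, List.getElem_map, List.getElem_range]
  have hval : f (l.idxOf (f t)) = f t := by rw [← hget2, hget]
  exact hf _ hidx _ ht hval

lemma length_filter_range (n : ℕ) (p : ℕ → Bool) :
    ((List.range n).filter p).length = ((Finset.range n).filter (fun i => p i = true)).card := by
  simp [Finset.filter, Finset.range, Multiset.range, Multiset.filter, List.countP_eq_length_filter]

lemma sum_map_range {M} [AddCommMonoid M] (n : ℕ) (f : ℕ → M) :
    ((List.range n).map f).sum = ∑ i ∈ Finset.range n, f i := rfl

lemma getLast?_map_range {α} {n : ℕ} (hn : 0 < n) (f : ℕ → α) :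
    ((List.range n).map f).getLast? = some (f (n-1)) := by
  rw [List.getLast?_eq_getElem?]
  simp [Nat.sub_lt hn Nat.one_pos]

lemma max'_eq {m : ℕ} (T : LinearOrder (Fin m)) (s : Finset (Fin m)) (h : s.Nonempty)
    (a : Fin m) (ha : a ∈ s) (hmax : ∀ b ∈ s, T.le b a) : @Finset.max' _ T s h = a := by
  exact @le_antisymm (Fin m) T.toPartialOrder _ _ (@Finset.max'_le _ T s h a hmax)
    (@Finset.le_max' _ T s a ha)

lemma ttb_le {n : ℕ} (x y : Fin n) :
    (Ttb n).le x y ↔ (if x.val = 0 then n else x.val) ≤ (if y.val = 0 then n else y.val) :=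
  Iff.rfl

lemma cyc_indexOf {n : ℕ} (hn : 0 < n) {i : ℕ} (hi : i < n) (e : Fin n) :
    (cyc n hn i).idxOf e = if i ≤ e.val then e.val - i else e.val + n - i := by
  have he := e.isLt
  have hf : ∀ a < n, ∀ b < n,
      (⟨(i+a)%n, Nat.mod_lt _ hn⟩ : Fin n) = ⟨(i+b)%n, Nat.mod_lt _ hn⟩ → a = b := by
    intro a ha b hb h
    have h' : (i+a)%n = (i+b)%n := congrArg Fin.val h
    rw [mod2 hn (by omega), mod2 hn (by omega)] at h'
    split_ifs at h' <;> omega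
  set t := if i ≤ e.val then e.val - i else e.val + n - i with htdef
  have ht : t < n := by rw [htdef]; split <;> omega
  have hfe : (⟨(i+t)%n, Nat.mod_lt _ hn⟩ : Fin n) = e := by
    apply Fin.ext
    show (i+t)%n = e.val
    rw [mod2 hn (by omega)]
    rw [htdef]; split_ifs <;> omega
  rw [← hfe]
  exact indexOf_map_range _ hf ht

lemma desc_indexOf {n : ℕ} (hn : 0 < n) (e : Fin n) :
    (descVote n hn).idxOf e = n - 1 - e.val := by
  have he := e.isLt
  have hf : ∀ a < n, ∀ b < n,
      (⟨n-1-a, by omega⟩ : Fin n) = ⟨n-1-b, by omega⟩ → a = b := by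
    intro a ha b hb h
    have h' : n-1-a = n-1-b := congrArg Fin.val h
    omega
  have hfe : (⟨n-1-(n-1-e.val), by omega⟩ : Fin n) = e := Fin.ext (by
    show n-1-(n-1-e.val) = e.val; omega)
  conv_lhs => rw [← hfe]
  exact indexOf_map_range _ hf (t := n-1-e.val) (by omega)

lemma cyc_getLast {n : ℕ} (hn : 0 < n) (i : ℕ) :
    (cyc n hn i).getLast? = some ⟨(i + (n-1)) % n, Nat.mod_lt _ hn⟩ :=
  getLast?_map_range hn _

lemma desc_getLast {n : ℕ} (hn : 0 < n) :
    (descVote n hn).getLast? = some ⟨0, hn⟩ := by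
  rw [show descVote n hn = (List.range n).map (fun j => (⟨n-1-j, by omega⟩ : Fin n)) from rfl,
    getLast?_map_range hn]
  exact congrArg some (Fin.ext (by show n-1-(n-1) = 0; omega))

lemma fval {n a : ℕ} (h : a < n) : (⟨a, h⟩ : Fin n).val = a := rfl

lemma count_profile {n : ℕ} (hp : 0 < n) (p : List (Fin n) → Bool) :
    ((Pn n hp ++ [cyc n hp 0]).filter p).length
      = ((Finset.range n).filter (fun i => p (cyc n hp i) = true)).card
        + ((if p (descVote n hp) = true then 1 else 0)
          + (if p (cyc n hp 0) = true then 1 else 0)) := by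
  rw [Pn, List.filter_append, List.filter_append, List.length_append, List.length_append,
    Nat.add_assoc]
  congr 1
  · rw [List.filter_map, List.length_map, length_filter_range]
    simp [Function.comp]
  congr 1
  · rw [List.filter_singleton]
    by_cases h : p (descVote n hp) = true
    · simp [h]
    · simp [h]
  · rw [List.filter_singleton]
    by_cases h : p (cyc n hp 0) = true
    · simp [h]
    · simp [h]

lemma borda_const {n : ℕ} (hp : 0 < n) (e : Fin n) :
    bordaScore (Pn n hp ++ [cyc n hp 0]) e
      = (∑ t ∈ Finset.range n, (n - 1 - t)) + (n - 1) := by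
  have he := e.isLt
  rw [bordaScore, Pn]
  simp only [List.map_append, List.sum_append, List.map_map, List.map_cons, List.map_nil,
    List.sum_cons, List.sum_nil]
  have h1 : ((List.range n).map ((fun v : List (Fin n) => n - 1 - List.idxOf e v)
        ∘ fun i => cyc n hp i)).sum
      = ∑ i ∈ Finset.range n, (n - 1 - (cyc n hp i).idxOf e) := rfl
  rw [h1, desc_indexOf hp e, cyc_indexOf hp hp e]
  have hS : ∑ i ∈ Finset.range n, (n - 1 - (cyc n hp i).idxOf e)
      = ∑ t ∈ Finset.range n, (n - 1 - t) := by
    rw [Finset.sum_congr rfl (fun i hi => by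
      rw [cyc_indexOf hp (Finset.mem_range.1 hi) e])]
    refine Finset.sum_nbij' (i := fun a => if a ≤ e.val then e.val - a else e.val + n - a)
      (j := fun a => if a ≤ e.val then e.val - a else e.val + n - a) ?_ ?_ ?_ ?_ ?_ <;>
      intro a ha <;> simp only [Finset.mem_range] at * <;> split_ifs <;> omega
  rw [hS]
  have h2 : (if 0 ≤ e.val then e.val - 0 else e.val + n - 0) = e.val := by split <;> omega
  rw [h2]
  generalize (∑ t ∈ Finset.range n, (n - 1 - t)) = S
  omega

lemma last_eq {n : ℕ} (hn : 5 ≤ n) (hp : 0 < n) (e : Fin n) :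
    lastCount (Pn n hp ++ [cyc n hp 0]) e
      = 1 + ((if e.val = 0 then 1 else 0) + (if e.val = n - 1 then 1 else 0)) := by
  have he := e.isLt
  rw [lastCount, count_profile hp]
  have hcard : ((Finset.range n).filter
      (fun i => (decide ((cyc n hp i).getLast? = some e)) = true)).card = 1 := by
    have hset : ((Finset.range n).filter
        (fun i => (decide ((cyc n hp i).getLast? = some e)) = true))
        = {if e.val = n - 1 then 0 else e.val + 1} := by
      ext i
      simp only [Finset.mem_filter, Finset.mem_range, decide_eq_true_eq, Finset.mem_singleton,
        cyc_getLast hp, Option.some.injEq, Fin.ext_iff, fval]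
      constructor
      · rintro ⟨hi, hc⟩
        rw [mod2 hp (by omega)] at hc
        split_ifs at hc <;> split_ifs <;> omega
      · intro hi
        have hin : i < n := by split_ifs at hi <;> omega
        refine ⟨hin, ?_⟩
        rw [mod2 hp (by omega)]
        split_ifs at hi ⊢ <;> omega
    rw [hset, Finset.card_singleton]
  rw [hcard]
  have h2 : (if (decide ((descVote n hp).getLast? = some e)) = true then 1 else 0)
      = (if e.val = 0 then 1 else 0) := by
    simp only [desc_getLast hp, Option.some.injEq, Fin.ext_iff, fval, decide_eq_true_eq]
    split_ifs <;> omega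
  have h3 : (if (decide ((cyc n hp 0).getLast? = some e)) = true then 1 else 0)
      = (if e.val = n - 1 then 1 else 0) := by
    simp only [cyc_getLast hp, Option.some.injEq, Fin.ext_iff, fval, decide_eq_true_eq]
    rw [mod2 hp (by omega)]
    split_ifs <;> omega
  rw [h2, h3]

lemma pairN_big {n : ℕ} (hn : 5 ≤ n) (hp : 0 < n) :
    pairN (Pn n hp ++ [cyc n hp 0]) ⟨n - 2, Nat.sub_lt hp two_pos⟩ ⟨0, hp⟩ = n - 1 := by
  rw [pairN, count_profile hp]
  have hcard : ((Finset.range n).filter (fun i =>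
      (decide ((cyc n hp i).idxOf (⟨n - 2, by omega⟩ : Fin n)
        < (cyc n hp i).idxOf (⟨0, hp⟩ : Fin n))) = true)).card = n - 2 := by
    have hset : ((Finset.range n).filter (fun i =>
        (decide ((cyc n hp i).idxOf (⟨n - 2, by omega⟩ : Fin n)
          < (cyc n hp i).idxOf (⟨0, hp⟩ : Fin n))) = true)) = Finset.Icc 1 (n - 2) := by
      ext i
      simp only [Finset.mem_filter, Finset.mem_range, decide_eq_true_eq, Finset.mem_Icc]
      constructor
      · rintro ⟨hi, hc⟩
        rw [cyc_indexOf hp hi, cyc_indexOf hp hi] at hc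
        simp only [fval] at hc
        split_ifs at hc <;> omega
      · intro hi
        have hin : i < n := by omega
        refine ⟨hin, ?_⟩
        rw [cyc_indexOf hp hin, cyc_indexOf hp hin]
        simp only [fval]
        split_ifs <;> omega
    rw [hset, Nat.card_Icc]
    omega
  rw [hcard]
  have h2 : (if (decide ((descVote n hp).idxOf (⟨n - 2, by omega⟩ : Fin n)
      < (descVote n hp).idxOf (⟨0, hp⟩ : Fin n))) = true then 1 else 0) = 1 := by
    simp only [desc_indexOf hp, fval, decide_eq_true_eq]
    rw [if_pos (by omega)]
  have h3 : (if (decide ((cyc n hp 0).idxOf (⟨n - 2, by omega⟩ : Fin n)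
      < (cyc n hp 0).idxOf (⟨0, hp⟩ : Fin n))) = true then 1 else 0) = 0 := by
    simp only [cyc_indexOf hp hp, fval, decide_eq_true_eq]
    rw [if_neg (by split_ifs <;> omega)]
  rw [h2, h3]
  omega

lemma pairN_small {n : ℕ} (hn : 5 ≤ n) (hp : 0 < n) :
    pairN (Pn n hp ++ [cyc n hp 0]) ⟨0, hp⟩ ⟨n - 2, Nat.sub_lt hp two_pos⟩ = 3 := by
  rw [pairN, count_profile hp]
  have hcard : ((Finset.range n).filter (fun i =>
      (decide ((cyc n hp i).idxOf (⟨0, hp⟩ : Fin n)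
        < (cyc n hp i).idxOf (⟨n - 2, by omega⟩ : Fin n))) = true)).card = 2 := by
    have hset : ((Finset.range n).filter (fun i =>
        (decide ((cyc n hp i).idxOf (⟨0, hp⟩ : Fin n)
          < (cyc n hp i).idxOf (⟨n - 2, by omega⟩ : Fin n))) = true))
        = {0, n - 1} := by
      ext i
      simp only [Finset.mem_filter, Finset.mem_range, decide_eq_true_eq, Finset.mem_insert,
        Finset.mem_singleton]
      constructor
      · rintro ⟨hi, hc⟩
        rw [cyc_indexOf hp hi, cyc_indexOf hp hi] at hc
        simp only [fval] at hc
        split_ifs at hc <;> omega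
      · intro hi
        have hin : i < n := by omega
        refine ⟨hin, ?_⟩
        rw [cyc_indexOf hp hin, cyc_indexOf hp hin]
        simp only [fval]
        split_ifs <;> omega
    rw [hset]
    rw [Finset.card_insert_of_notMem (by simp; omega), Finset.card_singleton]
  rw [hcard]
  have h2 : (if (decide ((descVote n hp).idxOf (⟨0, hp⟩ : Fin n)
      < (descVote n hp).idxOf (⟨n - 2, by omega⟩ : Fin n))) = true then 1 else 0) = 0 := by
    simp only [desc_indexOf hp, fval, decide_eq_true_eq]
    rw [if_neg (by omega)]
  have h3 : (if (decide ((cyc n hp 0).idxOf (⟨0, hp⟩ : Fin n)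
      < (cyc n hp 0).idxOf (⟨n - 2, by omega⟩ : Fin n))) = true then 1 else 0) = 1 := by
    simp only [cyc_indexOf hp hp, fval, decide_eq_true_eq]
    rw [if_pos (by split_ifs <;> omega)]
  rw [h2, h3]

lemma bordaW {n : ℕ} (hn : 5 ≤ n) (hp : 0 < n) :
    haveI : NeZero n := ⟨Nat.pos_iff_ne_zero.mp hp⟩
    bordaWinner (Ttb n) (Pn n hp ++ [cyc n hp 0]) = (⟨0, hp⟩ : Fin n) := by
  haveI : NeZero n := ⟨Nat.pos_iff_ne_zero.mp hp⟩
  rw [bordaWinner]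
  apply max'_eq
  · refine Finset.mem_filter.2 ⟨Finset.mem_univ _, fun z => ?_⟩
    rw [borda_const hp, borda_const hp]
  · intro b hb
    rw [ttb_le]
    simp only [fval]
    have hb' := b.isLt
    split_ifs <;> omega

lemma vetoW {n : ℕ} (hn : 5 ≤ n) (hp : 0 < n) :
    haveI : NeZero n := ⟨Nat.pos_iff_ne_zero.mp hp⟩
    vetoWinner (Ttb n) (Pn n hp ++ [cyc n hp 0]) = (⟨n - 2, Nat.sub_lt hp two_pos⟩ : Fin n) := by
  haveI : NeZero n := ⟨Nat.pos_iff_ne_zero.mp hp⟩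
  rw [vetoWinner]
  apply max'_eq
  · refine Finset.mem_filter.2 ⟨Finset.mem_univ _, fun z => ?_⟩
    rw [last_eq hn hp, last_eq hn hp]
    simp only [fval]
    have hz := z.isLt
    split_ifs <;> omega
  · intro b hb
    have hmem := (Finset.mem_filter.1 hb).2 ⟨1, by omega⟩
    rw [last_eq hn hp, last_eq hn hp] at hmem
    simp only [fval] at hmem
    have hb' := b.isLt
    rw [ttb_le]
    simp only [fval]
    split_ifs at hmem ⊢ <;> first | omega | tauto

/-- On the profile `P_n` augmented with the single vote
`v = c_0 ≻ c_1 ≻ … ≻ c_{n-1}` (the Greedy manipulator vote): the Borda winner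
is `c_0`, the veto winner is `c_{n-2}`, `c_{n-2}` beats `c_0` in the pairwise
run-off, and hence the `veto + Borda` winner is `c_{n-2} ≠ c_0`; adding the
single vote ranking `c_0` first does not make `c_0` the `veto + Borda`
winner. -/
theorem greedy_veto_borda_counterexample (n : ℕ) (hn : 5 ≤ n) :
    haveI : NeZero n := ⟨by omega⟩
    bordaWinner (Ttb n) (Pn n (by omega) ++ [cyc n (by omega) 0])
        = (⟨0, by omega⟩ : Fin n) ∧
    vetoWinner (Ttb n) (Pn n (by omega) ++ [cyc n (by omega) 0])
        = (⟨n - 2, by omega⟩ : Fin n) ∧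
    pairN (Pn n (by omega) ++ [cyc n (by omega) 0]) (⟨0, by omega⟩ : Fin n) ⟨n - 2, by omega⟩
      < pairN (Pn n (by omega) ++ [cyc n (by omega) 0]) (⟨n - 2, by omega⟩ : Fin n) ⟨0, by omega⟩ ∧
    runoffWinner (Ttb n) (vetoWinner (Ttb n)) (bordaWinner (Ttb n))
        (Pn n (by omega) ++ [cyc n (by omega) 0]) = (⟨n - 2, by omega⟩ : Fin n) ∧
    (⟨n - 2, by omega⟩ : Fin n) ≠ (⟨0, by omega⟩ : Fin n) := by
  haveI : NeZero n := ⟨by omega⟩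
  have hp : 0 < n := by omega
  have h1 := bordaW hn hp
  have h2 := vetoW hn hp
  have h3 : pairN (Pn n hp ++ [cyc n hp 0]) (⟨0, hp⟩ : Fin n) ⟨n - 2, by omega⟩
      < pairN (Pn n hp ++ [cyc n hp 0]) (⟨n - 2, by omega⟩ : Fin n) ⟨0, hp⟩ := by
    rw [pairN_small hn hp, pairN_big hn hp]
    omega
  have hne : (⟨n - 2, by omega⟩ : Fin n) ≠ (⟨0, hp⟩ : Fin n) := by
    simp only [ne_eq, Fin.ext_iff, fval]
    omega
  refine ⟨h1, h2, h3, ?_, hne⟩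
  rw [runoffWinner]
  simp only [h1, h2]
  rw [if_neg hne, if_pos h3]
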